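/- Let (𝒳, μ) be a measure space and ψ₁,…,ψ_J : 𝒳 → ℝ be orthonormal in L²(μ), i.e. ∫ ψ_i ψ_j dμ = δ_{ij}. Let ρ be a measure on 𝒳 that is absolutely continuous with respect to μ with density p satisfying p(x) ≥ u > 0 μ-almost everywhere. Let Σ be the J×J matrix with entries Σ_{ij} = ∫ ψ_i ψ_j dρ. Then for every β ∈ ℝ^J one has βᵀΣβ ≥ u‖β‖₂², and consequently for every L ≥ 0 and every nonempty S ⊆ {1,…,J}, the compatibility constant satisfies φ²_Σ(L,S) ≥ u. -/
import Mathlib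

open MeasureTheory

noncomputable def compat {J : ℕ} (M : Matrix (Fin J) (Fin J) ℝ) (L : ℝ)
    (S : Finset (Fin J)) : ℝ :=
  ⨅ β : {β : Fin J → ℝ //
      (∑ j ∈ Sᶜ, |β j|) ≤ L * ∑ j ∈ S, |β j| ∧ ∃ j ∈ S, β j ≠ 0},
    (S.card : ℝ) * (∑ i, ∑ j, β.1 i * M i j * β.1 j) / (∑ j ∈ S, |β.1 j|) ^ 2

lemma expand_sq {𝒳 : Type*} {J : ℕ} (ψ : Fin J → 𝒳 → ℝ) (β : Fin J → ℝ) (x : 𝒳) :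
    (∑ j, β j * ψ j x)^2 = ∑ i, ∑ j, (β i * β j) * (ψ i x * ψ j x) := by
  rw [sq, Finset.sum_mul_sum]
  exact Finset.sum_congr rfl fun i _ => Finset.sum_congr rfl fun j _ => by ring

lemma int_expand {𝒳 : Type*} [MeasurableSpace 𝒳] (ν : Measure 𝒳) {J : ℕ}
    (ψ : Fin J → 𝒳 → ℝ) (β : Fin J → ℝ)
    (hI : ∀ i j : Fin J, Integrable (fun x => ψ i x * ψ j x) ν) :
    Integrable (fun x => (∑ j, β j * ψ j x)^2) ν ∧
    ∫ x, (∑ j, β j * ψ j x)^2 ∂ν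
      = ∑ i, ∑ j, (β i * β j) * ∫ x, ψ i x * ψ j x ∂ν := by
  have hfun : (fun x => (∑ j, β j * ψ j x)^2)
      = fun x => ∑ i, ∑ j, (β i * β j) * (ψ i x * ψ j x) :=
    funext fun x => expand_sq ψ β x
  have hInt : Integrable (fun x => ∑ i, ∑ j, (β i * β j) * (ψ i x * ψ j x)) ν :=
    integrable_finset_sum _ fun i _ =>
      integrable_finset_sum _ fun j _ => (hI i j).const_mul _
  refine ⟨hfun ▸ hInt, ?_⟩
  rw [hfun, integral_finset_sum _ fun i _ =>
      integrable_finset_sum _ fun j _ => (hI i j).const_mul _]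
  refine Finset.sum_congr rfl fun i _ => ?_
  rw [integral_finset_sum _ fun j _ => (hI i j).const_mul _]
  exact Finset.sum_congr rfl fun j _ => integral_const_mul _ _

theorem stmt3 (𝒳 : Type*) [MeasurableSpace 𝒳] (μ : Measure 𝒳) (J : ℕ) (hJ : 0 < J)
    (ψ : Fin J → 𝒳 → ℝ) (hψ : ∀ j, Measurable (ψ j))
    (horth : ∀ i j : Fin J, ∫ x, ψ i x * ψ j x ∂μ = if i = j then 1 else 0)
    (p : 𝒳 → ENNReal) (hp : Measurable p) (u : ℝ) (hu : 0 < u)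
    (hpu : ∀ᵐ x ∂μ, ENNReal.ofReal u ≤ p x)
    (ρ : Measure 𝒳) (hρ : ρ = μ.withDensity p)
    (hInt : ∀ i j : Fin J, Integrable (fun x => ψ i x * ψ j x) ρ)
    (M : Matrix (Fin J) (Fin J) ℝ) (hM : ∀ i j, M i j = ∫ x, ψ i x * ψ j x ∂ρ) :
    (∀ β : Fin J → ℝ, u * ∑ j, β j ^ 2 ≤ ∑ i, ∑ j, β i * M i j * β j) ∧
    (∀ L : ℝ, 0 ≤ L → ∀ S : Finset (Fin J), S.Nonempty → u ≤ compat M L S) := by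
  -- ψ j ^2 integrable over μ
  have hI2 : ∀ j : Fin J, Integrable (fun x => ψ j x * ψ j x) μ := by
    intro j
    by_contra h
    have h0 := integral_undef h
    rw [horth j j, if_pos rfl] at h0
    norm_num at h0
  have hIμ : ∀ i j : Fin J, Integrable (fun x => ψ i x * ψ j x) μ := by
    intro i j
    refine Integrable.mono' (((hI2 i).add (hI2 j)).div_const 2)
      (((hψ i).mul (hψ j)).aestronglyMeasurable) (.of_forall fun x => ?_)
    have := sq_nonneg (|ψ i x| - |ψ j x|)
    simp only [Real.norm_eq_abs, abs_mul, Pi.add_apply]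
    nlinarith [abs_nonneg (ψ i x), abs_nonneg (ψ j x), sq_abs (ψ i x), sq_abs (ψ j x)]
  -- main quadratic form bound
  have main : ∀ β : Fin J → ℝ, u * ∑ j, β j ^ 2 ≤ ∑ i, ∑ j, β i * M i j * β j := by
    intro β
    obtain ⟨hfiρ, hρeq⟩ := int_expand ρ ψ β hInt
    obtain ⟨hfiμ, hμeq⟩ := int_expand μ ψ β hIμ
    have hμval : ∫ x, (∑ j, β j * ψ j x)^2 ∂μ = ∑ j, β j ^ 2 := by
      rw [hμeq]
      simp [horth, mul_ite, Finset.sum_ite_eq, sq]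
    have hRHS : ∑ i, ∑ j, β i * M i j * β j
        = ∫ x, (∑ j, β j * ψ j x)^2 ∂ρ := by
      rw [hρeq]
      exact Finset.sum_congr rfl fun i _ => Finset.sum_congr rfl fun j _ => by
        rw [hM]; ring
    have hle : μ.withDensity (fun _ => ENNReal.ofReal u) ≤ ρ := by
      rw [hρ]; exact withDensity_mono hpu
    have hmono : ∫ x, (∑ j, β j * ψ j x)^2 ∂(μ.withDensity fun _ => ENNReal.ofReal u)
        ≤ ∫ x, (∑ j, β j * ψ j x)^2 ∂ρ :=
      integral_mono_measure hle (.of_forall fun x => sq_nonneg _) hfiρ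
    have hsmul : ∫ x, (∑ j, β j * ψ j x)^2 ∂(μ.withDensity fun _ => ENNReal.ofReal u)
        = u * ∫ x, (∑ j, β j * ψ j x)^2 ∂μ := by
      rw [withDensity_const, integral_smul_measure, ENNReal.toReal_ofReal hu.le,
        smul_eq_mul]
    rw [hRHS, ← hμval, ← hsmul]
    exact hmono
  refine ⟨main, fun L hL S hS => ?_⟩
  have hne : Nonempty {β : Fin J → ℝ //
      (∑ j ∈ Sᶜ, |β j|) ≤ L * ∑ j ∈ S, |β j| ∧ ∃ j ∈ S, β j ≠ 0} := by
    obtain ⟨j0, hj0⟩ := hS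
    refine ⟨⟨fun j => if j ∈ S then 1 else 0, ?_, ⟨j0, hj0, by simp [hj0]⟩⟩⟩
    have h1 : (∑ j ∈ Sᶜ, |if j ∈ S then (1:ℝ) else 0|) = 0 := by
      refine Finset.sum_eq_zero fun j hj => ?_
      simp [Finset.mem_compl.mp hj]
    rw [h1]
    positivity
  rw [compat]
  refine le_ciInf fun b => ?_
  obtain ⟨β, hβ1, j1, hj1, hj1ne⟩ := b
  simp only
  have hS1pos : 0 < ∑ j ∈ S, |β j| :=
    Finset.sum_pos' (fun j _ => abs_nonneg _) ⟨j1, hj1, abs_pos.mpr hj1ne⟩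
  rw [le_div_iff₀ (by positivity)]
  have hCS : (∑ j ∈ S, |β j|) ^ 2 ≤ (S.card : ℝ) * ∑ j ∈ S, β j ^ 2 := by
    have := sq_sum_le_card_mul_sum_sq (s := S) (f := fun j => |β j|)
    simpa [sq_abs] using this
  have hsub : (∑ j ∈ S, β j ^ 2) ≤ ∑ j, β j ^ 2 :=
    Finset.sum_le_sum_of_subset_of_nonneg (Finset.subset_univ S)
      (fun j _ _ => sq_nonneg _)
  have hcard : (0:ℝ) ≤ (S.card : ℝ) := Nat.cast_nonneg _
  calc u * (∑ j ∈ S, |β j|) ^ 2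
      ≤ u * ((S.card : ℝ) * ∑ j, β j ^ 2) := by
        refine mul_le_mul_of_nonneg_left ?_ hu.le
        exact hCS.trans (mul_le_mul_of_nonneg_left hsub hcard)
    _ = (S.card : ℝ) * (u * ∑ j, β j ^ 2) := by ring
    _ ≤ (S.card : ℝ) * (∑ i, ∑ j, β i * M i j * β j) :=
        mul_le_mul_of_nonneg_left (main β) hcard
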